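/- If the subgraph of G induced by S ⊂ [N] is acyclic and there exists a valid scalar linear encoding matrix for G of codelength ℓ, then there exists a valid scalar linear index code for G of codelength ℓ in which every receiver i ∈ S has locality r_i = 1. -/

import Mathlib

open Finset

/-- A unicast index coding problem on `N` receivers: receiver `i` demands message `i`
and knows messages indexed by `K i` as side information, with `i ∉ K i`. -/
structure IndexProblem (N : ℕ) where
  K : Fin N → Finset (Fin N)
  not_self : ∀ i, i ∉ K i

/-- A valid index code over alphabet `A` with message length `m` and codeword length `ℓ`:
an encoder together with query sets `R i`, such that receiver `i` can decode `x i`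
exactly from the queried codeword symbols `c_{R i}` and its side information. -/
structure IndexCode (N : ℕ) (G : IndexProblem N) (A : Type*) (m ℓ : ℕ) where
  enc : (Fin N → Fin m → A) → Fin ℓ → A
  R : Fin N → Finset (Fin ℓ)
  valid : ∀ (i : Fin N) (x y : Fin N → Fin m → A),
    (∀ t ∈ R i, enc x t = enc y t) → (∀ j ∈ G.K i, x j = y j) → x i = y i

/-- The optimal broadcast rate function `β_G^*(r)`: the infimum of broadcast rates `ℓ/m`
over all message lengths `m ≥ 1` and valid index codes with locality at most `r`. -/
noncomputable def betaStar (A : Type*) {N : ℕ} (G : IndexProblem N) (r : ℝ) : ℝ :=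
  sInf {β : ℝ | ∃ (m ℓ : ℕ) (_ : 0 < m) (C : IndexCode N G A m ℓ),
    (∀ i, ((C.R i).card : ℝ) ≤ r * m) ∧ β = (ℓ : ℝ) / m}

/-- A matrix `A` fits the side information graph `G` if its diagonal entries are `1`
and `A j i = 0` for all `i ≠ j` with `j ∉ K i`. -/
def Fits {N : ℕ} {F : Type*} [Field F] (G : IndexProblem N)
    (A : Matrix (Fin N) (Fin N) F) : Prop :=
  (∀ i, A i i = 1) ∧ ∀ i j, j ≠ i → j ∉ G.K i → A j i = 0

/-- `B` is a valid scalar linear encoding matrix for `G`: every receiver `i` can recover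
`x i` from the codeword `c = x B` and its side information `(x j, j ∈ K i)`. -/
def IsValidEncMatrix {N ℓ : ℕ} {F : Type*} [Field F] (G : IndexProblem N)
    (B : Matrix (Fin N) (Fin ℓ) F) : Prop :=
  ∀ (i : Fin N) (x y : Fin N → F),
    Matrix.vecMul x B = Matrix.vecMul y B → (∀ j ∈ G.K i, x j = y j) → x i = y i

/-- The column space of a matrix, i.e. the span of its columns. -/
def colSpace {n ℓ : ℕ} {F : Type*} [Field F] (B : Matrix (Fin n) (Fin ℓ) F) :
    Submodule F (Fin n → F) :=
  Submodule.span F (Set.range B.transpose)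

/-- There is a (nonempty) closed directed walk inside the vertex set `S`, where the edges of
the side information graph are `(i, j)` with `j ∈ K i`.  Its absence is equivalent to the
induced subgraph `G_S` being a directed acyclic graph. -/
def HasDirCycleIn {N : ℕ} (K : Fin N → Finset (Fin N)) (S : Finset (Fin N)) : Prop :=
  ∃ (n : ℕ) (v : ℕ → Fin N), 0 < n ∧ (∀ k ≤ n, v k ∈ S) ∧
    (∀ k < n, v (k + 1) ∈ K (v k)) ∧ v n = v 0

-- MAIN THEOREM PART (to be appended)

lemma exists_fit_column {N ℓ : ℕ} {F : Type*} [Field F] (G : IndexProblem N)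
    (B : Matrix (Fin N) (Fin ℓ) F) (hB : IsValidEncMatrix G B) (i : Fin N) :
    ∃ a : Fin N → F, a ∈ colSpace B ∧ a i = 1 ∧ ∀ j, j ≠ i → j ∉ G.K i → a j = 0 := by
  classical
  set E : Submodule F (Fin N → F) :=
    Submodule.span F ((fun j => Pi.single j (1 : F)) '' ↑(G.K i)) with hE
  have hmem : (Pi.single i (1 : F)) ∈ colSpace B ⊔ E := by
    by_contra hmem
    obtain ⟨f, hf1, hf2⟩ := Submodule.exists_dual_map_eq_bot_of_notMem hmem inferInstance
    have hker : ∀ w ∈ colSpace B ⊔ E, f w = 0 := by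
      intro w hw
      have : f w ∈ Submodule.map f (colSpace B ⊔ E) := Submodule.mem_map_of_mem hw
      rwa [hf2, Submodule.mem_bot] at this
    set y : Fin N → F := fun k => f (Pi.single k 1) with hy
    have hfw : ∀ w : Fin N → F, f w = ∑ k, w k * y k := by
      intro w
      rw [LinearMap.pi_apply_eq_sum_univ f w]
      refine Finset.sum_congr rfl fun k _ => ?_
      have : (fun j => if k = j then (1 : F) else 0) = Pi.single k 1 := by
        funext j; simp [Pi.single_apply, eq_comm]
      rw [this, smul_eq_mul, hy]
    have h1 : Matrix.vecMul y B = Matrix.vecMul 0 B := by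
      funext t
      have hc : B.transpose t ∈ colSpace B ⊔ E :=
        le_sup_left (α := Submodule F (Fin N → F))
          (Submodule.subset_span (Set.mem_range_self t))
      have := hker _ hc
      rw [hfw] at this
      simp only [Matrix.vecMul, dotProduct, Matrix.zero_vecMul]
      simp only [Matrix.transpose_apply] at this
      calc ∑ x : Fin N, y x * B x t = ∑ x : Fin N, B x t * y x :=
            Finset.sum_congr rfl fun k _ => mul_comm _ _
        _ = 0 := this
        _ = ∑ x : Fin N, (0 : Fin N → F) x * B x t := by simp
    have h2 : ∀ j ∈ G.K i, y j = (0 : Fin N → F) j := by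
      intro j hj
      have hje : (Pi.single j (1 : F)) ∈ colSpace B ⊔ E :=
        le_sup_right (α := Submodule F (Fin N → F))
          (Submodule.subset_span ⟨j, hj, rfl⟩)
      simpa [hy] using hker _ hje
    have := hB i y 0 h1 h2
    simp only [Pi.zero_apply] at this
    exact hf1 this
  obtain ⟨bv, hbv, z, hz, hsum⟩ := Submodule.mem_sup.mp hmem
  have hzj : ∀ j, j ∉ G.K i → z j = 0 := by
    intro j hj
    have hle : E ≤ LinearMap.ker (LinearMap.proj j (R := F) (φ := fun _ : Fin N => F)) := by
      rw [hE, Submodule.span_le]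
      rintro _ ⟨j', hj', rfl⟩
      have : j' ≠ j := fun h => hj (h ▸ hj')
      simp [LinearMap.mem_ker, Pi.single_apply, this]
    simpa using hle hz
  refine ⟨bv, hbv, ?_, ?_⟩
  · have := congrFun hsum i
    have hzi : z i = 0 := hzj i (G.not_self i)
    simp only [Pi.add_apply, hzi, add_zero] at this
    rw [this, Pi.single_eq_same]
  · intro j hji hjK
    have := congrFun hsum j
    have hzj' : z j = 0 := hzj j hjK
    simp only [Pi.add_apply, hzj', add_zero] at this
    rw [this, Pi.single_eq_of_ne hji]

lemma li_of_acyclic {N : ℕ} {F : Type*} [Field F] (G : IndexProblem N)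
    (S : Finset (Fin N)) (hS : ¬ HasDirCycleIn G.K S)
    (a : Fin N → Fin N → F) (hai : ∀ i, a i i = 1)
    (haj : ∀ i j, j ≠ i → j ∉ G.K i → a i j = 0) :
    LinearIndependent F (fun i : {x // x ∈ S} => a ↑i) := by
  classical
  rw [Fintype.linearIndependent_iff]
  intro g hg
  by_contra hne
  push_neg at hne
  obtain ⟨i₀, hi₀⟩ := hne
  have key : ∀ j : {x // x ∈ S}, g j ≠ 0 →
      ∃ i : {x // x ∈ S}, g i ≠ 0 ∧ (j : Fin N) ∈ G.K ↑i := by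
    intro j hj
    by_contra hno
    push_neg at hno
    apply hj
    have hsum := congrFun hg (j : Fin N)
    simp only [Finset.sum_apply, Pi.smul_apply, smul_eq_mul, Pi.zero_apply] at hsum
    have hjeq : ∑ i : {x // x ∈ S}, g i * a ↑i ↑j = g j := by
      rw [Finset.sum_eq_single j]
      · rw [hai, mul_one]
      · intro i _ hij
        by_cases hgi : g i = 0
        · rw [hgi, zero_mul]
        · rw [haj ↑i ↑j (fun h => hij (Subtype.ext h.symm)) (hno i hgi), mul_zero]
      · intro h; exact absurd (Finset.mem_univ j) h
    rw [← hjeq, hsum]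
  have hstep' : ∀ p : {p : {x // x ∈ S} // g p ≠ 0},
      ∃ q : {p : {x // x ∈ S} // g p ≠ 0}, (↑↑p : Fin N) ∈ G.K ↑↑q := by
    intro p
    obtain ⟨i, hgi, hK⟩ := key ↑p p.2
    exact ⟨⟨i, hgi⟩, hK⟩
  choose step hstep using hstep'
  set v : ℕ → {p : {x // x ∈ S} // g p ≠ 0} := fun n => step^[n] ⟨i₀, hi₀⟩ with hvdef
  have hv : ∀ n, (↑↑(v n) : Fin N) ∈ G.K ↑↑(v (n + 1)) := by
    intro n
    have h1 : v (n + 1) = step (v n) := Function.iterate_succ_apply' step n _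
    rw [h1]; exact hstep (v n)
  obtain ⟨m, n, hmn, hveq⟩ := Finite.exists_ne_map_eq_of_infinite v
  obtain ⟨c, b, hab, heq⟩ : ∃ c b, c < b ∧ v c = v b := by
    rcases hmn.lt_or_gt with h | h
    · exact ⟨m, n, h, hveq⟩
    · exact ⟨n, m, h, hveq.symm⟩
  apply hS
  refine ⟨b - c, fun k => ↑↑(v (b - k)), Nat.sub_pos_of_lt hab, ?_, ?_, ?_⟩
  · intro k _; exact (v (b - k)).1.2
  · intro k hk
    have h1 : b - k - 1 + 1 = b - k := by omega
    have h3 := hv (b - k - 1)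
    rw [h1] at h3
    show (↑↑(v (b - (k + 1))) : Fin N) ∈ G.K ↑↑(v (b - k))
    have h2 : b - (k + 1) = b - k - 1 := by omega
    rw [h2]
    exact h3
  · show (↑↑(v (b - (b - c))) : Fin N) = ↑↑(v (b - 0))
    have h4 : b - (b - c) = c := by omega
    rw [h4, Nat.sub_zero, heq]

theorem acyclic_subset_locality_one' {N ℓ : ℕ} {F : Type*} [Field F]
    (G : IndexProblem N) (S : Finset (Fin N)) (hS : ¬ HasDirCycleIn G.K S)
    (B : Matrix (Fin N) (Fin ℓ) F) (hB : IsValidEncMatrix G B) :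
    ∃ (B' : Matrix (Fin N) (Fin ℓ) F) (A : Matrix (Fin N) (Fin N) F),
      Fits G A ∧ colSpace A ≤ colSpace B' ∧ IsValidEncMatrix G B' ∧
      ∀ i ∈ S, ∃ t : Fin ℓ, A.transpose i = B'.transpose t := by
  classical
  choose a haB hai haj using fun i => exists_fit_column G B hB i
  have hli : LinearIndependent F (fun i : {x // x ∈ S} => a ↑i) :=
    li_of_acyclic G S hS a hai haj
  set s₀ : Set (Fin N → F) := Set.range (fun i : {x // x ∈ S} => a ↑i) with hs₀
  have hs₀li : LinearIndependent F ((↑) : s₀ → (Fin N → F)) := hli.linearIndepOn_id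
  have hs₀t : s₀ ⊆ ↑(colSpace B) := by rintro _ ⟨i, rfl⟩; exact haB ↑i
  obtain ⟨b, hbt, hsb, hspan, hbli⟩ := exists_linearIndepOn_id_extension hs₀li hs₀t
  haveI : Fintype b := (LinearIndependent.setFinite hbli).fintype
  have hspanb : Submodule.span F b = colSpace B := by
    apply le_antisymm
    · rw [Submodule.span_le]; exact hbt
    · rw [colSpace, Submodule.span_le]
      intro w hw
      exact hspan (Submodule.subset_span hw)
  have hcard : Fintype.card b ≤ ℓ := by
    have h1 : Module.finrank F (Submodule.span F b) = b.toFinset.card :=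
      finrank_span_set_eq_card hbli
    have h2 : Module.finrank F (colSpace B) ≤ ℓ := by
      have := finrank_range_le_card (R := F) B.transpose
      simp only [Set.finrank, Fintype.card_fin] at this
      convert this using 1
      rfl
    rw [← Set.toFinset_card, ← h1, hspanb]
    exact h2
  set n₀ := Fintype.card b with hn₀
  set e : b ≃ Fin n₀ := Fintype.equivFin b with he
  set g : Fin ℓ → (Fin N → F) :=
    fun t => if h : (t : ℕ) < n₀ then ((e.symm ⟨t, h⟩ : b) : Fin N → F) else 0 with hg
  set B' : Matrix (Fin N) (Fin ℓ) F := Matrix.of fun n t => g t n with hB'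
  have hBt : ∀ t, B'.transpose t = g t := fun t => rfl
  have hrange_sub : ∀ t, g t ∈ Submodule.span F b := by
    intro t
    by_cases h : (t : ℕ) < n₀
    · rw [hg]; simp only [dif_pos h]; exact Submodule.subset_span (e.symm ⟨t, h⟩).2
    · rw [hg]; simp only [dif_neg h]; exact Submodule.zero_mem _
  have hb_sub : b ⊆ Set.range g := by
    intro x hx
    refine ⟨Fin.castLE hcard (e ⟨x, hx⟩), ?_⟩
    have hlt : ((Fin.castLE hcard (e ⟨x, hx⟩) : Fin ℓ) : ℕ) < n₀ := (e ⟨x, hx⟩).2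
    rw [hg]
    simp only [dif_pos hlt]
    have h5 : (⟨((Fin.castLE hcard (e ⟨x, hx⟩) : Fin ℓ) : ℕ), hlt⟩ : Fin n₀) = e ⟨x, hx⟩ :=
      Fin.ext rfl
    rw [h5, Equiv.symm_apply_apply]
  have hcolB' : colSpace B' = colSpace B := by
    rw [← hspanb]
    apply le_antisymm
    · rw [colSpace, Submodule.span_le]
      rintro _ ⟨t, rfl⟩
      rw [hBt]
      exact hrange_sub t
    · rw [Submodule.span_le]
      intro x hx
      obtain ⟨t, ht⟩ := hb_sub hx
      exact Submodule.subset_span ⟨t, (hBt t).trans ht⟩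
  set A : Matrix (Fin N) (Fin N) F := Matrix.of fun j i => a i j with hA
  have hAt : ∀ i, A.transpose i = a i := fun i => rfl
  refine ⟨B', A, ⟨fun i => hai i, fun i j h1 h2 => haj i j h1 h2⟩, ?_, ?_, ?_⟩
  · rw [colSpace, Submodule.span_le]
    rintro _ ⟨i, rfl⟩
    rw [hAt, SetLike.mem_coe, hcolB']
    exact haB i
  · intro i x y hxy hK
    refine hB i x y ?_ hK
    have hzero : ∀ w ∈ colSpace B', ∑ k, (x k - y k) * w k = 0 := by
      intro w hw
      refine Submodule.span_induction ?_ ?_ ?_ ?_ hw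
      · rintro _ ⟨t, rfl⟩
        have ht := congrFun hxy t
        simp only [Matrix.vecMul, dotProduct] at ht
        simp only [Matrix.transpose_apply, sub_mul, Finset.sum_sub_distrib, ht, sub_self]
      · simp
      · intro u v _ _ hu hv
        simp only [Pi.add_apply, mul_add, Finset.sum_add_distrib, hu, hv, add_zero]
      · intro c u _ hu
        simp only [Pi.smul_apply, smul_eq_mul, mul_left_comm, ← Finset.mul_sum, hu, mul_zero]
    funext t
    have := hzero (B.transpose t) (by rw [hcolB']; exact Submodule.subset_span ⟨t, rfl⟩)
    simp only [Matrix.transpose_apply, sub_mul, Finset.sum_sub_distrib, sub_eq_zero] at this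
    simpa [Matrix.vecMul, dotProduct] using this
  · intro i hi
    have hmem : a i ∈ b := hsb ⟨⟨i, hi⟩, rfl⟩
    obtain ⟨t, ht⟩ := hb_sub hmem
    exact ⟨t, by rw [hAt, hBt, ht]⟩
/-- if `G_S` is acyclic and `G` admits a valid scalar linear encoding matrix of
codelength `ℓ`, then `G` admits a valid scalar linear index code of codelength `ℓ` in which
every receiver `i ∈ S` has locality `1` (the `i`-th column of the fitting matrix appears as a
column of the encoding matrix). -/
theorem acyclic_subset_locality_one {N ℓ : ℕ} {F : Type*} [Field F]
    (G : IndexProblem N) (S : Finset (Fin N)) (hS : ¬ HasDirCycleIn G.K S)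
    (B : Matrix (Fin N) (Fin ℓ) F) (hB : IsValidEncMatrix G B) :
    ∃ (B' : Matrix (Fin N) (Fin ℓ) F) (A : Matrix (Fin N) (Fin N) F),
      Fits G A ∧ colSpace A ≤ colSpace B' ∧ IsValidEncMatrix G B' ∧
      ∀ i ∈ S, ∃ t : Fin ℓ, A.transpose i = B'.transpose t := by
  exact acyclic_subset_locality_one' G S hS B hB
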